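/- arXiv:2107.04659 — 3 statements merged into one kernel-verified Lean document; each statement's English description precedes it below -/
import Mathlib

section
/- A proper graded ideal I of R is a graded n-almost 1-absorbing prime ideal of R for every n ≥ 2 if and only if I is a graded ω-1-absorbing prime ideal of R. -/
/-- `I` is a graded 1-absorbing prime ideal "relative to" the subtraction of the set `S`:
whenever `a b c` are nonunit homogeneous elements with `a*b*c ∈ I - S`,
then `a*b ∈ I` or `c ∈ I`. -/
def IsGrOneAbsPrimeWrt {ι R : Type*} [AddGroup ι] [DecidableEq ι] [CommRing R]
    (𝒜 : ι → AddSubgroup R) [GradedRing 𝒜] (S : Set R) (I : HomogeneousIdeal 𝒜) : Prop :=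
  I.toIdeal ≠ ⊤ ∧ ∀ a b c : R, SetLike.IsHomogeneousElem 𝒜 a → SetLike.IsHomogeneousElem 𝒜 b →
    SetLike.IsHomogeneousElem 𝒜 c → ¬IsUnit a → ¬IsUnit b → ¬IsUnit c →
    a * b * c ∈ I.toIdeal → a * b * c ∉ S → a * b ∈ I.toIdeal ∨ c ∈ I.toIdeal

/-- A proper graded ideal `I` is a graded `n`-almost 1-absorbing prime ideal of `R`
for every `n ≥ 2` if and only if `I` is a graded `ω`-1-absorbing prime ideal of `R`
(here the `ω`-condition subtracts `⋂_{n ≥ 1} Iⁿ`). -/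
theorem stmt1 {ι R : Type*} [AddGroup ι] [DecidableEq ι] [CommRing R] [Nontrivial R]
    (𝒜 : ι → AddSubgroup R) [GradedRing 𝒜]
    (I : HomogeneousIdeal 𝒜) (hproper : I.toIdeal ≠ ⊤) :
    (∀ n : ℕ, 2 ≤ n → IsGrOneAbsPrimeWrt 𝒜 ((I.toIdeal ^ n : Ideal R) : Set R) I) ↔
      IsGrOneAbsPrimeWrt 𝒜 (⋂ n ∈ Set.Ici 1, ((I.toIdeal ^ n : Ideal R) : Set R)) I := by
  constructor
  · intro h
    refine ⟨hproper, fun a b c ha hb hc ua ub uc hmem hnot => ?_⟩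
    rw [Set.mem_iInter₂] at hnot
    push_neg at hnot
    obtain ⟨n, hn1, hnmem⟩ := hnot
    rcases eq_or_lt_of_le (Set.mem_Ici.mp hn1) with h1 | h2
    · exact absurd hmem (by simpa [← h1] using hnmem)
    · exact (h n h2).2 a b c ha hb hc ua ub uc hmem hnmem
  · intro h n hn
    refine ⟨hproper, fun a b c ha hb hc ua ub uc hmem hnot => ?_⟩
    refine h.2 a b c ha hb hc ua ub uc hmem fun hcap => ?_
    exact hnot (Set.mem_iInter₂.mp hcap n (le_trans one_le_two hn))
end

section
/- Let R be a graded von Neumann regular ring and let x ∈ h(R) be a nonunit homogeneous element. Then the principal graded ideal Rx is a graded almost 1-absorbing prime ideal of R. -/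
/-- `R` is a graded von Neumann regular ring: for each `g` and each `a ∈ R_g`,
there exists `y ∈ R_{g⁻¹}` such that `a = a²y`. -/
def GradedVNRegular {ι R : Type*} [AddGroup ι] [CommRing R]
    (𝒜 : ι → AddSubgroup R) : Prop :=
  ∀ g : ι, ∀ a ∈ 𝒜 g, ∃ y ∈ 𝒜 (-g), a = a ^ 2 * y

/-- Let `R` be a graded von Neumann regular ring and `x ∈ h(R)` a nonunit. Then `Rx` is a
graded almost 1-absorbing prime ideal of `R`: it is a proper graded ideal, and whenever
`a, b, c ∈ h(R)` are nonunits with `abc ∈ Rx - (Rx)²`, then `ab ∈ Rx` or `c ∈ Rx`. -/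
theorem stmt18 {ι R : Type*} [AddGroup ι] [DecidableEq ι] [CommRing R] [Nontrivial R]
    (𝒜 : ι → AddSubgroup R) [GradedRing 𝒜]
    (hreg : GradedVNRegular 𝒜)
    (x : R) (hx : SetLike.IsHomogeneousElem 𝒜 x) (hxu : ¬IsUnit x) :
    (Ideal.span {x}).IsHomogeneous 𝒜 ∧ Ideal.span {x} ≠ ⊤ ∧
    ∀ a b c : R, SetLike.IsHomogeneousElem 𝒜 a → SetLike.IsHomogeneousElem 𝒜 b →
      SetLike.IsHomogeneousElem 𝒜 c → ¬IsUnit a → ¬IsUnit b → ¬IsUnit c →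
      a * b * c ∈ Ideal.span {x} → a * b * c ∉ (Ideal.span {x}) ^ 2 →
      a * b ∈ Ideal.span {x} ∨ c ∈ Ideal.span {x} := by
  refine ⟨Ideal.homogeneous_span 𝒜 _ (by simpa using hx), ?_, ?_⟩
  · intro h
    exact hxu (Ideal.span_singleton_eq_top.mp h)
  · -- key: x ∈ (span {x})^2, so span {x} = (span {x})^2
    obtain ⟨g, hg⟩ := hx
    obtain ⟨y, hy, hxy⟩ := hreg g x hg
    have hx2 : x ∈ (Ideal.span {x}) ^ 2 := by
      have h2 : x ^ 2 * y ∈ (Ideal.span {x}) ^ 2 := by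
        rw [pow_two, sq, mul_assoc]
        exact Ideal.mul_mem_mul (Ideal.mem_span_singleton_self x)
          (Ideal.mul_mem_right y _ (Ideal.mem_span_singleton_self x))
      nth_rewrite 2 [hxy]; exact h2
    have heq : (Ideal.span {x}) ^ 2 = Ideal.span {x} := by
      apply le_antisymm
      · rw [pow_two]; exact Ideal.mul_le_right
      · rw [Ideal.span_le]
        intro z hz
        rw [Set.mem_singleton_iff] at hz
        subst hz
        exact hx2
    intro a b c _ _ _ _ _ _ habc habc2
    rw [heq] at habc2
    exact absurd habc habc2
end

section
/- Let R be a graded von Neumann regular ring and let x ∈ h(R) be a homogeneous element. Then there exists an idempotent graded ideal J of R (i.e. J² = J) such that R = Rx + J and Rx ∩ J = {0}. -/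
/-- Let `R` be a graded von Neumann regular ring and `x ∈ h(R)`. Then there exists an
idempotent graded ideal `J` of `R` (`J² = J`) such that `R = Rx + J` and `Rx ∩ J = {0}`. -/
theorem stmt19 {ι R : Type*} [AddGroup ι] [DecidableEq ι] [CommRing R] [Nontrivial R]
    (𝒜 : ι → AddSubgroup R) [GradedRing 𝒜]
    (hreg : GradedVNRegular 𝒜)
    (x : R) (hx : SetLike.IsHomogeneousElem 𝒜 x) :
    ∃ J : Ideal R, J.IsHomogeneous 𝒜 ∧ J * J = J ∧
      Ideal.span {x} ⊔ J = ⊤ ∧ Ideal.span {x} ⊓ J = ⊥ := by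
  obtain ⟨g, hg⟩ := hx
  obtain ⟨y, hy, hxy⟩ := hreg g x hg
  set e : R := x * y with he
  have hee : e * e = e := by
    have : x * y * (x * y) = (x ^ 2 * y) * y := by ring
    rw [he, this, ← hxy]
  refine ⟨Ideal.span {1 - e}, ?_, ?_, ?_, ?_⟩
  · apply Ideal.homogeneous_span
    rintro z hz
    simp only [Set.mem_singleton_iff] at hz
    subst hz
    exact ⟨0, by
      have h1 : (1 : R) ∈ 𝒜 0 := SetLike.one_mem_graded 𝒜
      have h2 : e ∈ 𝒜 0 := by
        have := SetLike.mul_mem_graded hg hy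
        simpa using this
      exact sub_mem h1 h2⟩
  · rw [Ideal.span_singleton_mul_span_singleton]
    congr 1
    have : (1 - e) * (1 - e) = 1 - e - (e - e * e) := by ring
    rw [this, hee]; ring
  · rw [Ideal.eq_top_iff_one]
    have h1 : e ∈ Ideal.span {x} := by
      rw [he, mul_comm]
      exact Ideal.mul_mem_left _ _ (Ideal.subset_span rfl)
    have h2 : (1 : R) - e ∈ Ideal.span {1 - e} := Ideal.subset_span rfl
    have h3 : e + (1 - e) ∈ Ideal.span {x} ⊔ Ideal.span {1 - e} :=
      Submodule.add_mem _ (Ideal.mem_sup_left h1) (Ideal.mem_sup_right h2)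
    simpa using h3
  · rw [eq_bot_iff]
    rintro a ⟨ha1, ha2⟩
    obtain ⟨r, hr⟩ := Ideal.mem_span_singleton'.mp ha1
    obtain ⟨s, hs⟩ := Ideal.mem_span_singleton'.mp ha2
    have hae : a * e = a := by
      rw [← hr, he]
      have : r * x * (x * y) = r * (x ^ 2 * y) := by ring
      rw [this, ← hxy]
    have hae0 : a * e = 0 := by
      rw [← hs]
      have : s * (1 - e) * e = s * (e - e * e) := by ring
      rw [this, hee]; ring
    simp [hae0 ▸ hae.symm, Ideal.mem_bot]
end
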